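/- Every non-crossing permutation σ of {1,…,n} has as many descents as its inverse: des(σ) = des(σ^{−1}). -/

import Mathlib

open scoped Classical

namespace Stmt

/-- Number of inversions of a permutation of `{1,…,n}`. -/
def invP {n : ℕ} (σ : Equiv.Perm (Fin n)) : ℕ :=
  (Finset.univ.filter (fun p : Fin n × Fin n => p.1 < p.2 ∧ σ p.2 < σ p.1)).card

/-- Descent set of a permutation, as 1-indexed positions in `{1,…,n-1}`. -/
def permDes {n : ℕ} (σ : Equiv.Perm (Fin n)) : Finset ℕ :=
  (Finset.Ico 1 n).filter (fun i =>
    ∃ h : i < n, σ ⟨i, h⟩ < σ ⟨i - 1, Nat.lt_of_le_of_lt (Nat.sub_le i 1) h⟩)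

def desP {n : ℕ} (σ : Equiv.Perm (Fin n)) : ℕ := (permDes σ).card

def majP {n : ℕ} (σ : Equiv.Perm (Fin n)) : ℕ := ∑ i ∈ permDes σ, i

def imajP {n : ℕ} (σ : Equiv.Perm (Fin n)) : ℕ := majP σ⁻¹

/-- Every orbit of `σ` is an increasing cycle: each element is mapped to the
next larger element of its orbit, the largest being mapped to the smallest. -/
def IncCycles {n : ℕ} (σ : Equiv.Perm (Fin n)) : Prop :=
  ∀ x : Fin n,
    ((∃ y, σ.SameCycle x y ∧ x < y) →
      x < σ x ∧ ∀ y, σ.SameCycle x y → x < y → σ x ≤ y) ∧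
    ((∀ y, σ.SameCycle x y → y ≤ x) → ∀ y, σ.SameCycle x y → σ x ≤ y)

/-- No two distinct orbits of `σ` cross. -/
def NoCrossing {n : ℕ} (σ : Equiv.Perm (Fin n)) : Prop :=
  ¬ ∃ a b c d : Fin n, a < b ∧ b < c ∧ c < d ∧
      σ.SameCycle a c ∧ σ.SameCycle b d ∧ ¬σ.SameCycle a b

/-- Non-crossing permutations of `{1,…,n}`. -/
def IsNC {n : ℕ} (σ : Equiv.Perm (Fin n)) : Prop := IncCycles σ ∧ NoCrossing σ

section Aux

variable {n : ℕ} {σ : Equiv.Perm (Fin n)}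

lemma perm_apply_inv_self (σ : Equiv.Perm (Fin n)) (x : Fin n) : σ (σ⁻¹ x) = x :=
  σ.apply_symm_apply x

lemma perm_inv_apply_self (σ : Equiv.Perm (Fin n)) (x : Fin n) : σ⁻¹ (σ x) = x :=
  σ.symm_apply_apply x

lemma sc_next (σ : Equiv.Perm (Fin n)) (x : Fin n) : σ.SameCycle x (σ x) :=
  Equiv.Perm.sameCycle_apply_right.mpr (Equiv.Perm.SameCycle.refl σ x)

lemma sc_prev (σ : Equiv.Perm (Fin n)) (x : Fin n) : σ.SameCycle x (σ⁻¹ x) :=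
  Equiv.Perm.sameCycle_symm_apply_right.mpr (Equiv.Perm.SameCycle.refl σ x)

lemma cross (hnc : NoCrossing σ) {a b c d : Fin n} (h1 : a < b) (h2 : b < c) (h3 : c < d)
    (hac : σ.SameCycle a c) (hbd : σ.SameCycle b d) (hab : ¬σ.SameCycle a b) : False :=
  hnc ⟨a, b, c, d, h1, h2, h3, hac, hbd, hab⟩

lemma next_facts (hinc : IncCycles σ) {x y : Fin n} (hxy : σ.SameCycle x y) (h : x < y) :
    x < σ x ∧ ∀ z, σ.SameCycle x z → x < z → σ x ≤ z :=
  (hinc x).1 ⟨y, hxy, h⟩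

lemma top_facts (hinc : IncCycles σ) {x : Fin n} (hx : σ x < x) :
    ∀ y, σ.SameCycle x y → σ x ≤ y ∧ y ≤ x := by
  have htop : ∀ y, σ.SameCycle x y → y ≤ x := by
    intro y hy
    by_contra hlt
    push_neg at hlt
    exact absurd ((hinc x).1 ⟨y, hy, hlt⟩).1 (not_lt.mpr hx.le)
  exact fun y hy => ⟨(hinc x).2 htop y hy, htop y hy⟩

lemma prev_facts (hinc : IncCycles σ) {x y : Fin n} (hxy : σ.SameCycle x y) (h : y < x) :
    σ⁻¹ x < x ∧ ∀ z, σ.SameCycle x z → z < x → z ≤ σ⁻¹ x := by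
  have hzx : σ (σ⁻¹ x) = x := perm_apply_inv_self σ x
  have hne : σ⁻¹ x ≠ x := by
    intro he
    have hfix : σ x = x := by conv_lhs => rw [← he, hzx]
    obtain ⟨k, hk⟩ := hxy
    rw [Equiv.Perm.zpow_apply_eq_self_of_apply_eq_self hfix k] at hk
    exact absurd hk (ne_of_gt h)
  have hzlt : σ⁻¹ x < x := by
    rcases lt_or_gt_of_ne hne with hlt | hgt
    · exact hlt
    · exfalso
      have h1 : σ (σ⁻¹ x) < σ⁻¹ x := by rw [hzx]; exact hgt
      have h2 := top_facts hinc h1 y (((sc_prev σ x).symm).trans hxy)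
      rw [hzx] at h2
      exact absurd h2.1 (not_le.mpr h)
  refine ⟨hzlt, fun z hz hzx' => ?_⟩
  by_contra hc
  push_neg at hc
  have hsc : σ.SameCycle (σ⁻¹ x) z := ((sc_prev σ x).symm).trans hz
  have := (next_facts hinc hsc hc).2 z hsc hc
  rw [hzx] at this
  exact absurd this (not_le.mpr hzx')

lemma bot_facts (hinc : IncCycles σ) {x : Fin n} (hx : x < σ⁻¹ x) :
    ∀ y, σ.SameCycle x y → x ≤ y ∧ y ≤ σ⁻¹ x := by
  have hzx : σ (σ⁻¹ x) = x := perm_apply_inv_self σ x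
  have h1 : σ (σ⁻¹ x) < σ⁻¹ x := by rw [hzx]; exact hx
  intro y hy
  have h2 := top_facts hinc h1 y (((sc_prev σ x).symm).trans hy)
  rw [hzx] at h2
  exact h2

/-- `x` is the top of a nontrivial cycle, `u` is the integer successor of the bottom `σ x`;
then `σ⁻¹ u < x`. -/
lemma L1 (hinc : IncCycles σ) (hnc : NoCrossing σ) {x u : Fin n} (hb : σ x < x)
    (hu : (u : ℕ) = (σ x : ℕ) + 1) : σ⁻¹ u < x := by
  have htop := top_facts hinc hb
  have hsx : σ.SameCycle x (σ x) := sc_next σ x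
  have hσu : σ x < u := by rw [Fin.lt_def, hu]; omega
  have hux : (u : ℕ) ≤ (x : ℕ) := by
    have : (σ x : ℕ) < (x : ℕ) := hb
    omega
  by_cases hc : σ.SameCycle (σ x) u
  · have hle : u ≤ x := (htop u (hsx.trans hc)).2
    have := (prev_facts hinc hc.symm hσu).1
    exact lt_of_lt_of_le this hle
  · have hneq : u ≠ x := by
      intro he
      exact hc (he ▸ hsx.symm)
    have hult : u < x := lt_of_le_of_ne (by rwa [Fin.le_def]) hneq
    by_contra hge
    push_neg at hge
    have hne2 : σ⁻¹ u ≠ x := by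
      intro he
      have : u = σ x := by rw [← he, perm_apply_inv_self σ]
      rw [this] at hu; omega
    have hxlt : x < σ⁻¹ u := lt_of_le_of_ne hge (Ne.symm hne2)
    exact cross hnc hσu hult hxlt hsx.symm (sc_prev σ u) hc

/-- `x < σ x` (so `σ x` is the next element of the cycle above `x`) and `x < w < σ x`;
then `x < σ⁻¹ w`. -/
lemma L2 (hinc : IncCycles σ) (hnc : NoCrossing σ) {x w : Fin n} (hb : x < σ x)
    (hw1 : x < w) (hw2 : w < σ x) : x < σ⁻¹ w := by
  have hnext := next_facts hinc (sc_next σ x) hb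
  by_contra hge
  push_neg at hge
  have hne : σ⁻¹ w ≠ x := by
    intro he
    have : w = σ x := by rw [← he, perm_apply_inv_self σ]
    exact absurd this (ne_of_lt hw2)
  have ht : σ⁻¹ w < x := lt_of_le_of_ne hge hne
  have hnsc : ¬σ.SameCycle (σ⁻¹ w) x := by
    intro hsc
    have hxw : σ.SameCycle x w := (hsc.symm).trans (sc_prev σ w).symm
    exact absurd (hnext.2 w hxw hw1) (not_le.mpr hw2)
  exact cross hnc ht hw1 hw2 ((sc_prev σ w).symm) (sc_next σ x) hnsc

/-- `x < σ x` and `x < u < σ x`; then `σ u < σ x`. -/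
lemma L3 (hinc : IncCycles σ) (hnc : NoCrossing σ) {x u : Fin n} (hb : x < σ x)
    (hu1 : x < u) (hu2 : u < σ x) : σ u < σ x := by
  have hnext := next_facts hinc (sc_next σ x) hb
  by_contra hge
  push_neg at hge
  have hnsc : ¬σ.SameCycle x u := by
    intro hsc
    exact absurd (hnext.2 u hsc hu1) (not_le.mpr hu2)
  have hne : σ x ≠ σ u := fun he => hnsc (σ.injective he ▸ Equiv.Perm.SameCycle.refl σ x)
  have hlt : σ x < σ u := lt_of_le_of_ne hge hne
  exact cross hnc hu1 hu2 hlt (sc_next σ x) (sc_next σ u) hnsc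

/-- `x` is the top of a nontrivial cycle (bottom `σ x`), `σ x ≤ w < x`; then `σ x < σ w`. -/
lemma L4 (hinc : IncCycles σ) (hnc : NoCrossing σ) {x w : Fin n} (hb : σ x < x)
    (hw1 : σ x ≤ w) (hw2 : w < x) : σ x < σ w := by
  rcases eq_or_lt_of_le hw1 with he | hw1'
  · -- w = σ x is the bottom
    have hbot : ∀ y, σ.SameCycle (σ x) y → σ x ≤ y := by
      intro y hy
      have hinvx : σ⁻¹ (σ x) = x := perm_inv_apply_self σ x
      have hx2 : σ x < σ⁻¹ (σ x) := by rw [hinvx]; exact hb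
      exact (bot_facts hinc hx2 y hy).1
    have hge : σ x ≤ σ w := by rw [← he]; exact hbot _ (sc_next σ (σ x))
    rcases eq_or_lt_of_le hge with he2 | h2
    · exfalso
      have hxw : x = w := σ.injective he2
      rw [← he] at hxw
      exact absurd hxw.symm (ne_of_lt hb)
    · exact h2
  · by_contra hge
    push_neg at hge
    have hne : σ w ≠ σ x := fun he => (ne_of_lt hw2) (σ.injective he)
    have hlt : σ w < σ x := lt_of_le_of_ne hge hne
    have htop := top_facts hinc hb
    by_cases hc : σ.SameCycle x w
    · have := (htop (σ w) (hc.trans (sc_next σ w))).1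
      exact absurd this (not_le.mpr hlt)
    · have hnsc : ¬σ.SameCycle (σ w) (σ x) := by
        intro hsc
        exact hc (((sc_next σ x).trans hsc.symm).trans (sc_next σ w).symm)
      exact cross hnc hlt hw1' hw2 ((sc_next σ w).symm) ((sc_next σ x).symm) hnsc

/-- `x < σ x`, `u` the integer successor of `x`, `u < σ x`; then `u ≤ σ u`. -/
lemma L5 (hinc : IncCycles σ) (hnc : NoCrossing σ) {x u : Fin n} (hb : x < σ x)
    (hu1 : (u : ℕ) = (x : ℕ) + 1) (hu2 : u < σ x) : u ≤ σ u := by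
  by_contra hlt
  push_neg at hlt
  have hnext := next_facts hinc (sc_next σ x) hb
  have hxu : x < u := by rw [Fin.lt_def]; omega
  have hσule : (σ u : ℕ) ≤ (x : ℕ) := by
    have : (σ u : ℕ) < (u : ℕ) := hlt
    omega
  have hne : σ u ≠ x := by
    intro he
    have hsc : σ.SameCycle x u := (he ▸ (sc_next σ u)).symm
    exact absurd (hnext.2 u hsc hxu) (not_le.mpr hu2)
  have hσu : σ u < x := lt_of_le_of_ne (by rwa [Fin.le_def]) hne
  have hnsc : ¬σ.SameCycle (σ u) x := by
    intro hsc
    have : σ.SameCycle x u := (hsc.symm).trans ((sc_next σ u).symm)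
    exact absurd (hnext.2 u this hxu) (not_le.mpr hu2)
  exact cross hnc hσu hxu hu2 ((sc_next σ u).symm) (sc_next σ x) hnsc

/-- `x < σ x`, `w` the integer predecessor of `σ x`, `x < w`; then `σ⁻¹ w ≤ w`. -/
lemma L6 (hinc : IncCycles σ) (hnc : NoCrossing σ) {x w : Fin n} (hb : x < σ x)
    (hw1 : x < w) (hw2 : (w : ℕ) + 1 = (σ x : ℕ)) : σ⁻¹ w ≤ w := by
  by_contra hlt
  push_neg at hlt
  have hnext := next_facts hinc (sc_next σ x) hb
  have hwσ : w < σ x := by rw [Fin.lt_def]; omega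
  have hne : σ⁻¹ w ≠ σ x := by
    intro he
    have hwc : σ.SameCycle x w := ((sc_next σ x).trans (he ▸ (sc_prev σ w).symm)).symm.symm
    exact absurd (hnext.2 w hwc hw1) (not_le.mpr hwσ)
  have hgt : σ x < σ⁻¹ w := by
    rcases lt_trichotomy (σ⁻¹ w) (σ x) with h | h | h
    · exfalso
      have h1 : (w : ℕ) < ((σ⁻¹ w : Fin n) : ℕ) := hlt
      have h2 : ((σ⁻¹ w : Fin n) : ℕ) < (σ x : ℕ) := h
      omega
    · exact absurd h hne
    · exact h
  have hnsc : ¬σ.SameCycle x w := by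
    intro hsc
    exact absurd (hnext.2 w hsc hw1) (not_le.mpr hwσ)
  exact cross hnc hw1 hwσ hgt (sc_next σ x) (sc_prev σ w) hnsc

lemma mem_permDes_iff {τ : Equiv.Perm (Fin n)} {i : ℕ} :
    i ∈ permDes τ ↔ 1 ≤ i ∧ ∃ h : i < n,
      τ ⟨i, h⟩ < τ ⟨i - 1, Nat.lt_of_le_of_lt (Nat.sub_le i 1) h⟩ := by
  constructor
  · intro h
    rw [permDes, Finset.mem_filter, Finset.mem_Ico] at h
    exact ⟨h.1.1, h.2⟩
  · rintro ⟨h1, hn, hd⟩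
    rw [permDes, Finset.mem_filter, Finset.mem_Ico]
    exact ⟨⟨h1, hn⟩, hn, hd⟩

def FFn (σ : Equiv.Perm (Fin n)) (i : ℕ) : ℕ :=
  if h : i < n then
    (if ((σ ⟨i, h⟩ : Fin n) : ℕ) < i then ((σ ⟨i, h⟩ : Fin n) : ℕ) + 1
      else ((σ ⟨i - 1, Nat.lt_of_le_of_lt (Nat.sub_le i 1) h⟩ : Fin n) : ℕ)) else 0

def GGn (σ : Equiv.Perm (Fin n)) (j : ℕ) : ℕ :=
  if h : j < n then
    (if j - 1 < ((σ⁻¹ ⟨j - 1, Nat.lt_of_le_of_lt (Nat.sub_le j 1) h⟩ : Fin n) : ℕ)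
      then ((σ⁻¹ ⟨j - 1, Nat.lt_of_le_of_lt (Nat.sub_le j 1) h⟩ : Fin n) : ℕ)
      else ((σ⁻¹ ⟨j, h⟩ : Fin n) : ℕ) + 1) else 0

lemma FFn_pos {i : ℕ} (h : i < n) (hc : ((σ ⟨i, h⟩ : Fin n) : ℕ) < i) :
    FFn σ i = ((σ ⟨i, h⟩ : Fin n) : ℕ) + 1 := by
  rw [FFn, dif_pos h, if_pos hc]

lemma FFn_neg {i : ℕ} (h : i < n) (hc : ¬((σ ⟨i, h⟩ : Fin n) : ℕ) < i) :
    FFn σ i = ((σ ⟨i - 1, Nat.lt_of_le_of_lt (Nat.sub_le i 1) h⟩ : Fin n) : ℕ) := by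
  rw [FFn, dif_pos h, if_neg hc]

lemma GGn_pos {j : ℕ} (h : j < n)
    (hc : j - 1 < ((σ⁻¹ ⟨j - 1, Nat.lt_of_le_of_lt (Nat.sub_le j 1) h⟩ : Fin n) : ℕ)) :
    GGn σ j = ((σ⁻¹ ⟨j - 1, Nat.lt_of_le_of_lt (Nat.sub_le j 1) h⟩ : Fin n) : ℕ) := by
  rw [GGn, dif_pos h, if_pos hc]

lemma GGn_neg {j : ℕ} (h : j < n)
    (hc : ¬(j - 1 < ((σ⁻¹ ⟨j - 1, Nat.lt_of_le_of_lt (Nat.sub_le j 1) h⟩ : Fin n) : ℕ))) :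
    GGn σ j = ((σ⁻¹ ⟨j, h⟩ : Fin n) : ℕ) + 1 := by
  rw [GGn, dif_pos h, if_neg hc]

end Aux

/-- A non-crossing permutation has as many descents as its inverse. -/
theorem desP_NC_eq_desP_inv (n : ℕ) (σ : Equiv.Perm (Fin n)) (h : IsNC σ) :
    desP σ = desP σ⁻¹ := by
  obtain ⟨hinc, hnc⟩ := h
  unfold desP
  refine Finset.card_nbij' (FFn σ) (GGn σ) ?_ ?_ ?_ ?_
  · -- maps into permDes σ⁻¹
    intro a ha
    obtain ⟨h1, han, hdes⟩ := mem_permDes_iff.mp ha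
    set x1 : Fin n := ⟨a, han⟩ with hx1
    set x0 : Fin n := ⟨a - 1, Nat.lt_of_le_of_lt (Nat.sub_le a 1) han⟩ with hx0
    by_cases hb : ((σ x1 : Fin n) : ℕ) < a
    · rw [FFn_pos han hb]
      have hjn : (σ x1 : ℕ) + 1 < n := by omega
      refine mem_permDes_iff.mpr ⟨by omega, hjn, ?_⟩
      have he1 : (⟨(σ x1 : ℕ) + 1 - 1, Nat.lt_of_le_of_lt (Nat.sub_le _ 1) hjn⟩ : Fin n)
          = σ x1 := by apply Fin.ext; simp
      rw [he1, perm_inv_apply_self σ]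
      exact L1 hinc hnc (show σ x1 < x1 by rw [Fin.lt_def]; exact hb) rfl
    · rw [FFn_neg han hb]
      push_neg at hb
      have hj : a < ((σ x0 : Fin n) : ℕ) := lt_of_le_of_lt hb hdes
      have hjn : ((σ x0 : Fin n) : ℕ) < n := (σ x0).2
      rw [show (σ (⟨a - 1, Nat.lt_of_le_of_lt (Nat.sub_le a 1) han⟩ : Fin n)) = σ x0 from rfl]
      refine mem_permDes_iff.mpr ⟨by omega, hjn, ?_⟩
      have he1 : (⟨(σ x0 : ℕ), hjn⟩ : Fin n) = σ x0 := by apply Fin.ext; simp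
      rw [he1, perm_inv_apply_self σ]
      refine L2 hinc hnc ?_ ?_ ?_
      · show x0 < σ x0
        rw [Fin.lt_def]; show a - 1 < (σ x0 : ℕ); omega
      · rw [Fin.lt_def]; show a - 1 < (σ x0 : ℕ) - 1; omega
      · rw [Fin.lt_def]; show (σ x0 : ℕ) - 1 < (σ x0 : ℕ); omega
  · -- maps into permDes σ
    intro b hb
    obtain ⟨h1, hbn, hdes⟩ := mem_permDes_iff.mp hb
    set y1 : Fin n := ⟨b, hbn⟩ with hy1
    set y0 : Fin n := ⟨b - 1, Nat.lt_of_le_of_lt (Nat.sub_le b 1) hbn⟩ with hy0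
    by_cases hc : b - 1 < ((σ⁻¹ y0 : Fin n) : ℕ)
    · rw [GGn_pos hbn hc]
      have hin : ((σ⁻¹ y0 : Fin n) : ℕ) < n := (σ⁻¹ y0).2
      rw [show (σ⁻¹ (⟨b - 1, Nat.lt_of_le_of_lt (Nat.sub_le b 1) hbn⟩ : Fin n)) = σ⁻¹ y0 from rfl]
      refine mem_permDes_iff.mpr ⟨by omega, hin, ?_⟩
      have he1 : (⟨(σ⁻¹ y0 : ℕ), hin⟩ : Fin n) = σ⁻¹ y0 := by apply Fin.ext; simp
      rw [he1, perm_apply_inv_self σ]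
      have hXb : σ (σ⁻¹ y0) < σ⁻¹ y0 := by
        rw [perm_apply_inv_self σ, Fin.lt_def]; exact hc
      have := L4 hinc hnc (x := σ⁻¹ y0)
        (w := ⟨(σ⁻¹ y0 : ℕ) - 1, Nat.lt_of_le_of_lt (Nat.sub_le _ 1) hin⟩) hXb ?_ ?_
      · rw [perm_apply_inv_self σ] at this; exact this
      · rw [Fin.le_def, perm_apply_inv_self σ]; show b - 1 ≤ (σ⁻¹ y0 : ℕ) - 1; omega
      · rw [Fin.lt_def]; show (σ⁻¹ y0 : ℕ) - 1 < (σ⁻¹ y0 : ℕ); omega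
    · rw [GGn_neg hbn hc]
      push_neg at hc
      have ht : ((σ⁻¹ y1 : Fin n) : ℕ) < b - 1 := lt_of_lt_of_le hdes hc
      have hin : ((σ⁻¹ y1 : Fin n) : ℕ) + 1 < n := by omega
      refine mem_permDes_iff.mpr ⟨by omega, hin, ?_⟩
      have he1 : (⟨(σ⁻¹ y1 : ℕ) + 1 - 1, Nat.lt_of_le_of_lt (Nat.sub_le _ 1) hin⟩ : Fin n)
          = σ⁻¹ y1 := by apply Fin.ext; simp
      rw [he1, perm_apply_inv_self σ]
      have hXb : σ⁻¹ y1 < σ (σ⁻¹ y1) := by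
        rw [perm_apply_inv_self σ, Fin.lt_def]; show (σ⁻¹ y1 : ℕ) < b; omega
      have := L3 hinc hnc (x := σ⁻¹ y1) (u := ⟨(σ⁻¹ y1 : ℕ) + 1, hin⟩) hXb ?_ ?_
      · rw [perm_apply_inv_self σ] at this; exact this
      · rw [Fin.lt_def]; show (σ⁻¹ y1 : ℕ) < (σ⁻¹ y1 : ℕ) + 1; omega
      · rw [Fin.lt_def, perm_apply_inv_self σ]; show (σ⁻¹ y1 : ℕ) + 1 < b; omega
  · -- left inverse
    intro a ha
    obtain ⟨h1, han, hdes⟩ := mem_permDes_iff.mp ha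
    set x1 : Fin n := ⟨a, han⟩ with hx1
    set x0 : Fin n := ⟨a - 1, Nat.lt_of_le_of_lt (Nat.sub_le a 1) han⟩ with hx0
    by_cases hb : ((σ x1 : Fin n) : ℕ) < a
    · rw [FFn_pos han hb]
      have hjn : (σ x1 : ℕ) + 1 < n := by omega
      have he1 : (⟨(σ x1 : ℕ) + 1 - 1, Nat.lt_of_le_of_lt (Nat.sub_le _ 1) hjn⟩ : Fin n)
          = σ x1 := by apply Fin.ext; simp
      have hcond : (σ x1 : ℕ) + 1 - 1
          < ((σ⁻¹ ⟨(σ x1 : ℕ) + 1 - 1, Nat.lt_of_le_of_lt (Nat.sub_le _ 1) hjn⟩ : Fin n) : ℕ) := by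
        rw [he1, perm_inv_apply_self σ]
        show (σ x1 : ℕ) + 1 - 1 < a
        omega
      rw [GGn_pos hjn hcond, he1, perm_inv_apply_self σ]
    · rw [FFn_neg han hb]
      push_neg at hb
      have hj : a < ((σ x0 : Fin n) : ℕ) := lt_of_le_of_lt hb hdes
      have hjn : ((σ x0 : Fin n) : ℕ) < n := (σ x0).2
      have hLe := L6 hinc hnc (x := x0)
        (w := ⟨(σ x0 : ℕ) - 1, Nat.lt_of_le_of_lt (Nat.sub_le _ 1) hjn⟩) ?_ ?_ ?_
      · have hcond : ¬((σ x0 : ℕ) - 1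
            < ((σ⁻¹ ⟨(σ x0 : ℕ) - 1, Nat.lt_of_le_of_lt (Nat.sub_le _ 1) hjn⟩ : Fin n) : ℕ)) := by
          push_neg
          rw [Fin.le_def] at hLe
          exact hLe
        rw [GGn_neg hjn hcond]
        have he1 : (⟨(σ x0 : ℕ), hjn⟩ : Fin n) = σ x0 := by apply Fin.ext; simp
        rw [he1, perm_inv_apply_self σ]
        show (a - 1) + 1 = a
        omega
      · rw [Fin.lt_def]; show a - 1 < (σ x0 : ℕ); omega
      · rw [Fin.lt_def]; show a - 1 < (σ x0 : ℕ) - 1; omega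
      · show ((σ x0 : ℕ) - 1) + 1 = (σ x0 : ℕ); omega
  · -- right inverse
    intro b hb
    obtain ⟨h1, hbn, hdes⟩ := mem_permDes_iff.mp hb
    set y1 : Fin n := ⟨b, hbn⟩ with hy1
    set y0 : Fin n := ⟨b - 1, Nat.lt_of_le_of_lt (Nat.sub_le b 1) hbn⟩ with hy0
    by_cases hc : b - 1 < ((σ⁻¹ y0 : Fin n) : ℕ)
    · rw [GGn_pos hbn hc]
      have hin : ((σ⁻¹ y0 : Fin n) : ℕ) < n := (σ⁻¹ y0).2
      have he1 : (⟨(σ⁻¹ y0 : ℕ), hin⟩ : Fin n) = σ⁻¹ y0 := by apply Fin.ext; simp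
      have hcond : ((σ ⟨(σ⁻¹ y0 : ℕ), hin⟩ : Fin n) : ℕ) < (σ⁻¹ y0 : ℕ) := by
        rw [he1, perm_apply_inv_self σ]
        show b - 1 < (σ⁻¹ y0 : ℕ)
        exact hc
      rw [FFn_pos hin hcond, he1, perm_apply_inv_self σ]
      show (b - 1) + 1 = b
      omega
    · rw [GGn_neg hbn hc]
      push_neg at hc
      have ht : ((σ⁻¹ y1 : Fin n) : ℕ) < b - 1 := lt_of_lt_of_le hdes hc
      have hin : ((σ⁻¹ y1 : Fin n) : ℕ) + 1 < n := by omega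
      have hXb : σ⁻¹ y1 < σ (σ⁻¹ y1) := by
        rw [perm_apply_inv_self σ, Fin.lt_def]; show (σ⁻¹ y1 : ℕ) < b; omega
      have hL5 := L5 hinc hnc (x := σ⁻¹ y1) (u := ⟨(σ⁻¹ y1 : ℕ) + 1, hin⟩) hXb rfl ?_
      · have hcond : ¬(((σ ⟨(σ⁻¹ y1 : ℕ) + 1, hin⟩ : Fin n) : ℕ) < (σ⁻¹ y1 : ℕ) + 1) := by
          push_neg
          rw [Fin.le_def] at hL5
          exact hL5
        rw [FFn_neg hin hcond]
        have he1 : (⟨(σ⁻¹ y1 : ℕ) + 1 - 1, Nat.lt_of_le_of_lt (Nat.sub_le _ 1) hin⟩ : Fin n)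
            = σ⁻¹ y1 := by apply Fin.ext; simp
        rw [he1, perm_apply_inv_self σ]
      · rw [Fin.lt_def, perm_apply_inv_self σ]; show (σ⁻¹ y1 : ℕ) + 1 < b; omega

end Stmt
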